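/- Let d > 0, L > 0, and let x₁, …, x_N be points of the closed ball of radius L in ℝ³ such that ‖x_j − x_k‖ ≥ 2d for all j ≠ k. Then Σ_{k=1}^N Σ_{j ≠ k} ‖x_k − x_j‖⁻⁴ ≤ 16 (L + d)³ d⁻⁷. -/

import Mathlib

open Metric MeasureTheory Finset ENNReal

private lemma sum_inv_sq_Icc (M : ℕ) :
    ∑ i ∈ Finset.Icc 1 M, ((i : ℝ) ^ 2)⁻¹ ≤ 2 - (M : ℝ)⁻¹ := by
  induction M with
  | zero => simp
  | succ n ih =>
    rw [Finset.sum_Icc_succ_top (by omega)]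
    rcases Nat.eq_zero_or_pos n with rfl | hn
    · norm_num
    · have h1 : (1 : ℝ) ≤ n := by exact_mod_cast hn
      have hn0 : (0 : ℝ) < n := by linarith
      have hn1 : (0 : ℝ) < (n : ℝ) + 1 := by linarith
      have key : (((n : ℕ) + 1 : ℕ) : ℝ) ^ 2 = ((n : ℝ) + 1) ^ 2 := by push_cast; ring
      have e1 : (n : ℝ)⁻¹ - ((n : ℝ) + 1)⁻¹ = ((n : ℝ) * ((n : ℝ) + 1))⁻¹ := by
        field_simp
        ring
      have e2 : (((n : ℝ) + 1) ^ 2)⁻¹ ≤ ((n : ℝ) * ((n : ℝ) + 1))⁻¹ := by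
        apply inv_anti₀ (by positivity)
        nlinarith
      have : ((((n : ℕ) + 1 : ℕ) : ℝ) ^ 2)⁻¹ ≤ (n : ℝ)⁻¹ - ((n : ℝ) + 1)⁻¹ := by
        rw [key, e1]; exact e2
      push_cast
      push_cast at ih
      linarith

private lemma sum_inv_sq (t : Finset ℕ) (ht : 0 ∉ t) : ∑ i ∈ t, ((i : ℝ) ^ 2)⁻¹ ≤ 2 := by
  have hsub : t ⊆ Finset.Icc 1 (t.sup (fun i => i)) := fun i hi =>
    Finset.mem_Icc.mpr ⟨Nat.one_le_iff_ne_zero.mpr (fun h => ht (h ▸ hi)),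
      Finset.le_sup (f := fun i => i) hi⟩
  calc ∑ i ∈ t, ((i : ℝ) ^ 2)⁻¹
      ≤ ∑ i ∈ Finset.Icc 1 (t.sup (fun i => i)), ((i : ℝ) ^ 2)⁻¹ :=
        Finset.sum_le_sum_of_subset_of_nonneg hsub (fun i _ _ => by positivity)
    _ ≤ 2 - ((t.sup (fun i => i) : ℕ) : ℝ)⁻¹ := sum_inv_sq_Icc _
    _ ≤ 2 := by
        have : (0:ℝ) ≤ (((t.sup (fun i => i) : ℕ) : ℝ))⁻¹ := by positivity
        linarith

private lemma ball_packing {ι : Type*} (s : Finset ι)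
    (y : ι → EuclideanSpace ℝ (Fin 3)) (cen : EuclideanSpace ℝ (Fin 3))
    {d R₀ R₁ : ℝ} (hd : 0 < d) (hR₀ : 0 ≤ R₀) (hR : R₀ ≤ R₁)
    (hsep : ∀ i ∈ s, ∀ j ∈ s, i ≠ j → 2 * d ≤ ‖y i - y j‖)
    (hsub : ∀ i ∈ s, ball (y i) d ⊆ closedBall cen R₁ \ ball cen R₀) :
    (s.card : ℝ) * d ^ 3 + R₀ ^ 3 ≤ R₁ ^ 3 := by
  classical
  set K : ℝ≥0∞ := ENNReal.ofReal
      (Real.sqrt Real.pi ^ 3 / Real.Gamma (3 / 2 + 1)) with hKdef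
  have hvol : ∀ (z : EuclideanSpace ℝ (Fin 3)) (r : ℝ),
      volume (ball z r) = ENNReal.ofReal r ^ 3 * K := by
    intro z r
    have := EuclideanSpace.volume_ball (Fin 3) z r
    simpa using this
  have hK0 : K ≠ 0 := by
    have h1 := hvol 0 1
    have h2 := measure_ball_pos volume (0 : EuclideanSpace ℝ (Fin 3)) one_pos
    intro h
    rw [h, mul_zero] at h1
    rw [h1] at h2
    exact lt_irrefl 0 h2
  have hKtop : K ≠ ⊤ := ENNReal.ofReal_ne_top
  have hvolc : volume (closedBall cen R₁) = ENNReal.ofReal R₁ ^ 3 * K := by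
    rw [Measure.addHaar_closedBall_eq_addHaar_ball, hvol]
  have hdisj : (↑s : Set ι).PairwiseDisjoint fun i => ball (y i) d := by
    intro i hi j hj hij
    exact ball_disjoint_ball (by rw [dist_eq_norm]; linarith [hsep i hi j hj hij])
  have hmeas : MeasurableSet (⋃ i ∈ s, ball (y i) d) :=
    MeasurableSet.biUnion s.countable_toSet (fun i _ => measurableSet_ball)
  have hdisj2 : Disjoint (ball cen R₀) (⋃ i ∈ s, ball (y i) d) := by
    refine Set.disjoint_left.mpr fun z hz hz2 => ?_
    obtain ⟨i, hi, hzi⟩ := Set.mem_iUnion₂.mp hz2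
    exact (hsub i hi hzi).2 hz
  have hsub2 : ball cen R₀ ∪ ⋃ i ∈ s, ball (y i) d ⊆ closedBall cen R₁ := by
    refine Set.union_subset ?_ (Set.iUnion₂_subset fun i hi z hz => (hsub i hi hz).1)
    exact ball_subset_closedBall.trans (closedBall_subset_closedBall hR)
  have key : volume (ball cen R₀) + ∑ i ∈ s, volume (ball (y i) d)
      ≤ volume (closedBall cen R₁) := by
    rw [← measure_biUnion_finset hdisj fun i _ => measurableSet_ball,
        ← measure_union hdisj2 hmeas]
    exact measure_mono hsub2
  rw [hvol cen R₀, hvolc, Finset.sum_congr rfl (fun i _ => hvol (y i) d),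
      Finset.sum_const, nsmul_eq_mul] at key
  have key2 : (ENNReal.ofReal R₀ ^ 3 + (s.card : ℝ≥0∞) * ENNReal.ofReal d ^ 3) * K
      ≤ ENNReal.ofReal R₁ ^ 3 * K := by
    calc (ENNReal.ofReal R₀ ^ 3 + (s.card : ℝ≥0∞) * ENNReal.ofReal d ^ 3) * K
        = ENNReal.ofReal R₀ ^ 3 * K + (s.card : ℝ≥0∞) * (ENNReal.ofReal d ^ 3 * K) := by
          ring
      _ ≤ ENNReal.ofReal R₁ ^ 3 * K := key
  have key3 : ENNReal.ofReal R₀ ^ 3 + (s.card : ℝ≥0∞) * ENNReal.ofReal d ^ 3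
      ≤ ENNReal.ofReal R₁ ^ 3 :=
    (ENNReal.mul_le_mul_iff_left hK0 hKtop).mp key2
  have e1 : ENNReal.ofReal R₀ ^ 3 + (s.card : ℝ≥0∞) * ENNReal.ofReal d ^ 3
      = ENNReal.ofReal (R₀ ^ 3 + (s.card : ℝ) * d ^ 3) := by
    rw [ENNReal.ofReal_add (pow_nonneg hR₀ 3) (by positivity),
        ← ENNReal.ofReal_pow hR₀, ← ENNReal.ofReal_pow hd.le,
        ENNReal.ofReal_mul (by positivity), ENNReal.ofReal_natCast]
  rw [e1, ← ENNReal.ofReal_pow (hR₀.trans hR)] at key3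
  have := (ENNReal.ofReal_le_ofReal_iff (pow_nonneg (hR₀.trans hR) 3)).mp key3
  linarith

/-- For a `2d`-separated family of points in the closed ball of radius `L` in `ℝ³`, the
double inverse fourth-power sum is bounded:
`Σ_k Σ_{j ≠ k} ‖x_k − x_j‖⁻⁴ ≤ 16 (L + d)³ d⁻⁷`. -/
theorem double_inverse_fourth_power_sum (d L : ℝ) (hd : 0 < d) (hL : 0 < L) (N : ℕ)
    (x : Fin N → EuclideanSpace ℝ (Fin 3))
    (hx : ∀ j, ‖x j‖ ≤ L)
    (hsep : ∀ j k, j ≠ k → 2 * d ≤ ‖x j - x k‖) :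
    ∑ k, ∑ j ∈ Finset.univ.erase k, (‖x k - x j‖ ^ 4)⁻¹ ≤ 16 * (L + d) ^ 3 / d ^ 7 := by
  classical
  have hdpos : (0 : ℝ) < 2 * d := by linarith
  -- global count: N * d³ ≤ (L+d)³
  have hglobal : ∀ i : Fin N, ball (x i) d ⊆
      closedBall (0 : EuclideanSpace ℝ (Fin 3)) (L + d) \ ball (0 : EuclideanSpace ℝ (Fin 3)) 0 := by
    intro i z hz
    refine ⟨?_, by simp⟩
    rw [mem_closedBall]
    have h1 : dist z (x i) < d := mem_ball.mp hz
    have h2 : dist (x i) 0 ≤ L := by rw [dist_zero_right]; exact hx i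
    calc dist z 0 ≤ dist z (x i) + dist (x i) 0 := dist_triangle _ _ _
      _ ≤ L + d := by linarith
  have hN : (N : ℝ) * d ^ 3 ≤ (L + d) ^ 3 := by
    have := ball_packing (Finset.univ : Finset (Fin N)) x 0 hd le_rfl (by positivity)
      (fun i _ j _ hij => hsep i j hij) (fun i _ => hglobal i)
    simpa using this
  -- inner bound
  have inner_bound : ∀ k : Fin N,
      ∑ j ∈ Finset.univ.erase k, (‖x k - x j‖ ^ 4)⁻¹ ≤ 31 / (2 * d ^ 4) := by
    intro k
    set m : Fin N → ℕ := fun j => ⌊‖x k - x j‖ / (2 * d)⌋₊ with hm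
    have hr : ∀ j ∈ Finset.univ.erase k, 2 * d ≤ ‖x k - x j‖ := by
      intro j hj
      rw [norm_sub_rev]
      exact hsep j k (Finset.mem_erase.mp hj).1
    have hm1 : ∀ j ∈ Finset.univ.erase k, 1 ≤ m j := by
      intro j hj
      apply Nat.le_floor
      rw [Nat.cast_one, le_div_iff₀ hdpos, one_mul]
      exact hr j hj
    have hmle : ∀ j, 2 * d * (m j : ℝ) ≤ ‖x k - x j‖ := by
      intro j
      have h0 : 0 ≤ ‖x k - x j‖ / (2 * d) := by positivity
      have := Nat.floor_le h0
      calc 2 * d * (m j : ℝ) ≤ 2 * d * (‖x k - x j‖ / (2 * d)) := by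
            exact mul_le_mul_of_nonneg_left this hdpos.le
        _ = ‖x k - x j‖ := by field_simp
    have hmlt : ∀ j, ‖x k - x j‖ < 2 * d * ((m j : ℝ) + 1) := by
      intro j
      have := Nat.lt_floor_add_one (‖x k - x j‖ / (2 * d))
      calc ‖x k - x j‖ = 2 * d * (‖x k - x j‖ / (2 * d)) := by field_simp
        _ < 2 * d * ((m j : ℝ) + 1) := by
            exact mul_lt_mul_of_pos_left this hdpos
    have step1 : ∑ j ∈ Finset.univ.erase k, (‖x k - x j‖ ^ 4)⁻¹
        ≤ ∑ j ∈ Finset.univ.erase k, ((2 * d * (m j : ℝ)) ^ 4)⁻¹ := by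
      apply Finset.sum_le_sum
      intro j hj
      have h1 : (1 : ℝ) ≤ (m j : ℝ) := by exact_mod_cast hm1 j hj
      have hpos : 0 < 2 * d * (m j : ℝ) := by nlinarith
      apply inv_anti₀ (by positivity)
      exact pow_le_pow_left₀ hpos.le (hmle j) 4
    set t := (Finset.univ.erase k).image m with ht
    have step2 : ∑ j ∈ Finset.univ.erase k, ((2 * d * (m j : ℝ)) ^ 4)⁻¹
        = ∑ i ∈ t, (((Finset.univ.erase k).filter fun j => m j = i).card : ℝ)
            * ((2 * d * (i : ℝ)) ^ 4)⁻¹ := by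
      rw [← Finset.sum_fiberwise_of_maps_to (fun j hj => Finset.mem_image_of_mem m hj)
        (fun j => ((2 * d * (m j : ℝ)) ^ 4)⁻¹)]
      refine Finset.sum_congr rfl fun i hi => ?_
      rw [Finset.sum_congr rfl (fun j hj => by rw [(Finset.mem_filter.mp hj).2]),
        Finset.sum_const, nsmul_eq_mul]
    have count : ∀ i ∈ t,
        ((((Finset.univ.erase k).filter fun j => m j = i).card : ℝ))
          ≤ 48 * (i : ℝ) ^ 2 + 48 * (i : ℝ) + 28 := by
      intro i hi
      obtain ⟨j₀, hj₀, hj₀i⟩ := Finset.mem_image.mp hi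
      have hi1 : 1 ≤ i := hj₀i ▸ hm1 j₀ hj₀
      have hI1 : (1 : ℝ) ≤ (i : ℝ) := by exact_mod_cast hi1
      have hsub' : ∀ j ∈ (Finset.univ.erase k).filter fun j => m j = i,
          ball (x j) d ⊆ closedBall (x k) ((2 * (i : ℝ) + 3) * d)
            \ ball (x k) ((2 * (i : ℝ) - 1) * d) := by
        intro j hj z hz
        obtain ⟨hjk, hji⟩ := Finset.mem_filter.mp hj
        have hd1 : dist z (x j) < d := mem_ball.mp hz
        have hd2 : dist (x j) (x k) = ‖x k - x j‖ := by
          rw [dist_eq_norm, norm_sub_rev]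
        have hlt : ‖x k - x j‖ < 2 * d * ((i : ℝ) + 1) := by
          have := hmlt j; rwa [hji] at this
        have hge : 2 * d * (i : ℝ) ≤ ‖x k - x j‖ := by
          have := hmle j; rwa [hji] at this
        constructor
        · rw [mem_closedBall]
          calc dist z (x k) ≤ dist z (x j) + dist (x j) (x k) := dist_triangle _ _ _
            _ ≤ (2 * (i : ℝ) + 3) * d := by rw [hd2]; nlinarith
        · intro hzmem
          rw [mem_ball] at hzmem
          have htri : dist (x j) (x k) ≤ dist (x j) z + dist z (x k) := dist_triangle _ _ _
          rw [dist_comm (x j) z] at htri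
          rw [hd2] at htri
          nlinarith
      have hpack := ball_packing ((Finset.univ.erase k).filter fun j => m j = i) x (x k)
        hd (by nlinarith) (by nlinarith)
        (fun a ha b hb hab => hsep a b hab) hsub'
      have hd3 : (0 : ℝ) < d ^ 3 := by positivity
      have hineq : ((((Finset.univ.erase k).filter fun j => m j = i).card : ℝ)) * d ^ 3
          ≤ (48 * (i : ℝ) ^ 2 + 48 * (i : ℝ) + 28) * d ^ 3 := by nlinarith
      exact le_of_mul_le_mul_right hineq hd3
    have step3 : ∑ i ∈ t, (((Finset.univ.erase k).filter fun j => m j = i).card : ℝ)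
          * ((2 * d * (i : ℝ)) ^ 4)⁻¹
        ≤ ∑ i ∈ t, (124 / (16 * d ^ 4)) * (((i : ℝ)) ^ 2)⁻¹ := by
      apply Finset.sum_le_sum
      intro i hi
      obtain ⟨j₀, hj₀, hj₀i⟩ := Finset.mem_image.mp hi
      have hi1 : 1 ≤ i := hj₀i ▸ hm1 j₀ hj₀
      have hI1 : (1 : ℝ) ≤ (i : ℝ) := by exact_mod_cast hi1
      have hIpos : (0 : ℝ) < (i : ℝ) := by linarith
      have hc := count i hi
      have hcard : (0 : ℝ) ≤ (((Finset.univ.erase k).filter fun j => m j = i).card : ℝ) :=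
        Nat.cast_nonneg _
      have he : ((2 * d * (i : ℝ)) ^ 4)⁻¹ = (16 * d ^ 4 * (i : ℝ) ^ 4)⁻¹ := by
        congr 1; ring
      rw [he]
      rw [div_mul_eq_mul_div, ← sub_nonneg]
      have hexp : 124 * ((i : ℝ) ^ 2)⁻¹ / (16 * d ^ 4)
          - (((Finset.univ.erase k).filter fun j => m j = i).card : ℝ)
            * (16 * d ^ 4 * (i : ℝ) ^ 4)⁻¹
          = (124 * (i : ℝ) ^ 2
            - (((Finset.univ.erase k).filter fun j => m j = i).card : ℝ))
            * (16 * d ^ 4 * (i : ℝ) ^ 4)⁻¹ := by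
        field_simp
      rw [hexp]
      apply mul_nonneg _ (by positivity)
      nlinarith
    have step4 : ∑ i ∈ t, (124 / (16 * d ^ 4)) * (((i : ℝ)) ^ 2)⁻¹ ≤ 31 / (2 * d ^ 4) := by
      rw [← Finset.mul_sum]
      have ht0 : 0 ∉ t := by
        intro h0
        obtain ⟨j₀, hj₀, hj₀i⟩ := Finset.mem_image.mp h0
        have := hm1 j₀ hj₀
        omega
      have := sum_inv_sq t ht0
      have hpos : (0 : ℝ) < 124 / (16 * d ^ 4) := by positivity
      calc (124 / (16 * d ^ 4)) * ∑ i ∈ t, (((i : ℝ)) ^ 2)⁻¹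
          ≤ (124 / (16 * d ^ 4)) * 2 := by
            exact mul_le_mul_of_nonneg_left this hpos.le
        _ ≤ 31 / (2 * d ^ 4) := by
            rw [div_mul_eq_mul_div, div_le_div_iff₀ (by positivity) (by positivity)]
            ring_nf
            nlinarith [pow_pos hd 4]
    calc ∑ j ∈ Finset.univ.erase k, (‖x k - x j‖ ^ 4)⁻¹
        ≤ ∑ j ∈ Finset.univ.erase k, ((2 * d * (m j : ℝ)) ^ 4)⁻¹ := step1
      _ = _ := step2
      _ ≤ _ := step3
      _ ≤ 31 / (2 * d ^ 4) := step4
  -- combine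
  calc ∑ k, ∑ j ∈ Finset.univ.erase k, (‖x k - x j‖ ^ 4)⁻¹
      ≤ ∑ _k : Fin N, 31 / (2 * d ^ 4) := Finset.sum_le_sum (fun k _ => inner_bound k)
    _ = (N : ℝ) * (31 / (2 * d ^ 4)) := by
        rw [Finset.sum_const, Finset.card_univ, Fintype.card_fin, nsmul_eq_mul]
    _ ≤ 16 * (L + d) ^ 3 / d ^ 7 := by
        rw [le_div_iff₀ (by positivity : (0:ℝ) < d ^ 7)]
        have key : (N : ℝ) * (31 / (2 * d ^ 4)) * d ^ 7 = (31 / 2) * ((N : ℝ) * d ^ 3) := by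
          field_simp
        rw [key]
        have hld : (0:ℝ) ≤ (L + d) ^ 3 := by positivity
        linarith
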